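/- arXiv:2311.15641 — 3 statements merged into one kernel-verified Lean document; each statement's English description precedes it below -/
import Mathlib

section
/- If f : ℝⁿ → ℝⁿ satisfies f(y) + α·y ≥ 0 componentwise for all y ≥ 0, and m ≥ max(α, 0), then for any step size φ > 0 the NSFD iteration y_{k+1} = (y_k + φ·f(y_k) + φ·m·y_k)/(1 + m·φ) maps the nonnegative orthant into itself; consequently, if y_0 ≥ 0 then y_k ≥ 0 for all k. -/
theorem nsfd_positivity (n : ℕ) (f : (Fin n → ℝ) → (Fin n → ℝ)) (α m φ : ℝ)
    (hf : ∀ y : Fin n → ℝ, 0 ≤ y → 0 ≤ f y + α • y)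
    (hm : m ≥ max α 0) (hφ : 0 < φ)
    (y : ℕ → (Fin n → ℝ))
    (hrec : ∀ k, y (k + 1) = (1 + m * φ)⁻¹ • (y k + φ • f (y k) + (φ * m) • y k))
    (h0 : 0 ≤ y 0) :
    ∀ k, 0 ≤ y k := by
  have hm0 : 0 ≤ m := le_trans (le_max_right α 0) hm
  have hmα : α ≤ m := le_trans (le_max_left α 0) hm
  have hpos : 0 < 1 + m * φ := by positivity
  intro k
  induction k with
  | zero => exact h0
  | succ k ih =>
    rw [hrec k]
    intro i
    have hfi := hf (y k) ih i
    simp only [Pi.add_apply, Pi.smul_apply, Pi.zero_apply, smul_eq_mul] at hfi ⊢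
    have hyi : 0 ≤ y k i := ih i
    have key : 0 ≤ y k i + φ * f (y k) i + φ * m * y k i := by
      have : y k i + φ * f (y k) i + φ * m * y k i
          = y k i + φ * (f (y k) i + α * y k i) + φ * (m - α) * y k i := by ring
      rw [this]
      have h1 : 0 ≤ φ * (f (y k) i + α * y k i) := by positivity
      have h2 : 0 ≤ φ * (m - α) * y k i := by
        apply mul_nonneg (mul_nonneg hφ.le (by linarith)) hyi
      linarith
    positivity
end

section
/- Let λ ∈ ℂ be an eigenvalue with Re λ < 0, and suppose m ≥ -|λ|²/(2·Re λ). Then for every φ > 0, the complex number μ = 1 + (φ/(1+mφ))·λ satisfies |μ| < 1. -/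
theorem nsfd_stable_eigenvalue (l : ℂ) (m φ : ℝ)
    (hre : l.re < 0)
    (hm : m ≥ -(‖l‖) ^ 2 / (2 * l.re))
    (hφ : 0 < φ) :
    ‖(1 + ((φ / (1 + m * φ) : ℝ) : ℂ) * l)‖ < 1 := by
  have hS : ‖l‖ ^ 2 = l.re ^ 2 + l.im ^ 2 := by
    rw [Complex.sq_norm, Complex.normSq_apply]; ring
  have hm0 : 0 ≤ m := by
    refine le_trans ?_ hm
    rw [show -(‖l‖) ^ 2 / (2 * l.re) = (‖l‖) ^ 2 / (-(2 * l.re)) by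
      rw [div_neg, neg_div]]
    exact div_nonneg (sq_nonneg _) (by linarith)
  have hd : 0 < 1 + m * φ := by nlinarith
  set c : ℝ := φ / (1 + m * φ) with hc
  have hc0 : 0 < c := div_pos hφ hd
  -- key: 2 m l.re ≤ -(l.re^2 + l.im^2)
  have hkey : 2 * m * l.re ≤ -(l.re ^ 2 + l.im ^ 2) := by
    have h2 : m * (2 * l.re) ≤ -(‖l‖) ^ 2 / (2 * l.re) * (2 * l.re) :=
      mul_le_mul_of_nonpos_right hm (by linarith)
    rw [div_mul_cancel₀ _ (by intro h; nlinarith : (2 : ℝ) * l.re ≠ 0)] at h2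
    nlinarith
  have hckey : c * (l.re ^ 2 + l.im ^ 2) < -2 * l.re := by
    rw [hc, div_mul_eq_mul_div, div_lt_iff₀ hd]
    nlinarith
  have hsq : ‖(1 + (c : ℂ) * l)‖ ^ 2 < 1 := by
    rw [Complex.sq_norm, Complex.normSq_apply]
    simp only [Complex.add_re, Complex.add_im, Complex.one_re, Complex.one_im,
      Complex.mul_re, Complex.mul_im, Complex.ofReal_re, Complex.ofReal_im]
    nlinarith [sq_nonneg (c * l.im), sq_nonneg (c * l.re)]
  have := norm_nonneg (1 + (c : ℂ) * l)
  nlinarith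
end

section
/- Let f : ℝ → ℝ with f(N) = b·e^{-aN}·N - d·N, a > 0, b > d > 0, N* = ln(b/d)/a, and let m ≥ d·ln(b/d)/2. Then for every φ > 0, the derivative at N* of the NSFD map g(N) = N + (φ/(1+mφ))·f(N) satisfies |g'(N*)| < 1. -/
theorem nsfd_single_species_stability (a b d m φ : ℝ)
    (ha : 0 < a) (hd : 0 < d) (hbd : d < b)
    (hm : m ≥ d * Real.log (b / d) / 2) (hφ : 0 < φ) :
    |deriv (fun N => N + (φ / (1 + m * φ)) * (b * Real.exp (-a * N) * N - d * N))
        (Real.log (b / d) / a)| < 1 := by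
  set L := Real.log (b / d) with hL
  have hL0 : 0 < L := Real.log_pos (by rw [lt_div_iff₀ hd]; linarith)
  set Ns := L / a with hNs
  have haNs : a * Ns = L := by rw [hNs]; field_simp [ha.ne']
  have hexp : Real.exp (-a * Ns) = d / b := by
    rw [neg_mul, haNs, hL, Real.log_div (by linarith) (by linarith),
      Real.exp_neg, Real.exp_sub, Real.exp_log (by linarith : (0:ℝ) < b),
      Real.exp_log hd]
    field_simp
  set C := φ / (1 + m * φ) with hC
  have hm0 : 0 < m := lt_of_lt_of_le (by positivity) hm
  have hden : 0 < 1 + m * φ := by nlinarith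
  have hC0 : 0 < C := div_pos hφ hden
  have hderiv : HasDerivAt
      (fun N => N + C * (b * Real.exp (-a * N) * N - d * N))
      (1 + C * (-(d * L))) Ns := by
    have h1 : HasDerivAt (fun N : ℝ => Real.exp (-a * N))
        (Real.exp (-a * Ns) * (-a)) Ns := by
      simpa [Function.comp_def] using (Real.hasDerivAt_exp (-a * Ns)).comp Ns
        (((hasDerivAt_id Ns).const_mul (-a)))
    have h2 : HasDerivAt (fun N : ℝ => b * Real.exp (-a * N) * N - d * N)
        ((b * (Real.exp (-a * Ns) * (-a))) * Ns + b * Real.exp (-a * Ns) * 1 - d * 1)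
        Ns := (((h1.const_mul b).mul (hasDerivAt_id Ns)).sub
          ((hasDerivAt_id Ns).const_mul d))
    have h3 := (hasDerivAt_id Ns).add (h2.const_mul C)
    refine h3.congr_deriv ?_
    rw [hexp, ← haNs]
    field_simp [ha.ne', (hd.trans hbd).ne', hden.ne']
    ring
  rw [hderiv.deriv]
  rw [abs_lt]
  constructor
  · have key : C * (d * L) < 2 := by
      rw [hC, div_mul_eq_mul_div, div_lt_iff₀ hden]
      nlinarith
    linarith
  · nlinarith [mul_pos hC0 (mul_pos hd hL0)]
end
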